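/- Let K ⊆ ℝ^n be a nonempty convex set, d : ℝ^n → ℝ differentiable, and c > 0. If λ* ∈ K satisfies L^c(λ*, η*, ω) ≤ 0 for all ω ∈ K, then λ* solves the variational inequality: ⟨ω − λ*, η*⟩ ≥ 0 for all ω ∈ K. -/

import Mathlib

open scoped RealInnerProductSpace

/-- Auchmuty's function `L^c(λ, η, ω) = c·d(λ) − c·d(ω) + ⟨η − c·∇d(λ), λ − ω⟩`. -/
noncomputable def Auchmuty {n : ℕ} (c : ℝ) (d : EuclideanSpace ℝ (Fin n) → ℝ)
    (lam eta om : EuclideanSpace ℝ (Fin n)) : ℝ :=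
  c * d lam - c * d om + ⟪eta - c • gradient d lam, lam - om⟫

/-- if `λ* ∈ K` satisfies `L^c(λ*, η*, ω) ≤ 0` for all `ω ∈ K`, with `K`
nonempty convex and `d` differentiable, then `λ*` solves the variational inequality:
`⟨ω − λ*, η*⟩ ≥ 0` for all `ω ∈ K`. -/
theorem stmt17 {n : ℕ} (hn : 0 < n) (K : Set (EuclideanSpace ℝ (Fin n)))
    (hK : K.Nonempty) (hKconvex : Convex ℝ K)
    (d : EuclideanSpace ℝ (Fin n) → ℝ)
    (hddiff : Differentiable ℝ d)
    (c : ℝ) (hc : 0 < c)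
    (lamstar etastar : EuclideanSpace ℝ (Fin n))
    (hlamstarK : lamstar ∈ K)
    (hL : ∀ om ∈ K, Auchmuty c d lamstar etastar om ≤ 0) :
    ∀ om ∈ K, 0 ≤ ⟪om - lamstar, etastar⟫ := by
  intro om homK
  set v := om - lamstar with hv
  set g : ℝ → ℝ := fun t => d (lamstar + t • v) with hg
  set D : ℝ := ⟪gradient d lamstar, v⟫ with hD
  -- derivative of g at 0
  have hinner : HasDerivAt (fun t : ℝ => lamstar + t • v) v 0 := by
    simpa using ((hasDerivAt_id (0:ℝ)).smul_const v).const_add lamstar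
  have hgrad : HasGradientAt d (gradient d lamstar) lamstar :=
    (hddiff lamstar).hasGradientAt
  have hfd : HasFDerivAt d (fderiv ℝ d lamstar) lamstar := (hddiff lamstar).hasFDerivAt
  have hDeq : (fderiv ℝ d lamstar) v = D := by
    rw [hD, hgrad.hasFDerivAt.fderiv]
    simp [InnerProductSpace.toDual_apply_apply]
  have hgderiv : HasDerivAt g D 0 := by
    have hfd' : HasFDerivAt d (fderiv ℝ d lamstar) (lamstar + (0:ℝ) • v) := by
      simpa using hfd
    have := hfd'.comp_hasDerivAt 0 hinner
    simpa [hg, hDeq, Function.comp_def] using this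
  -- inequality along the segment
  set B : ℝ := ⟪etastar - c • gradient d lamstar, v⟫ with hB
  have hslope : ∀ t ∈ Set.Ioo (0:ℝ) 1, -B ≤ c * slope g 0 t := by
    intro t ht
    have homt : lamstar + t • v ∈ K := by
      have := hKconvex hlamstarK homK (a := 1 - t) (b := t) (by linarith [ht.2])
        (le_of_lt ht.1) (by ring)
      convert this using 1
      rw [hv]
      module
    have hL' := hL _ homt
    rw [Auchmuty] at hL'
    have hlin : lamstar - (lamstar + t • v) = -(t • v) := by abel
    rw [hlin, inner_neg_right, real_inner_smul_right] at hL'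
    -- hL' : c * d lamstar - c * g t + -(t * ⟪etastar - c•grad, v⟫) ≤ 0
    have ht0 : (0:ℝ) < t := ht.1
    have hkey : c * d lamstar - c * (g t) ≤ t * B := by
      have : c * d lamstar - c * d (lamstar + t • v) + -(t * B) ≤ 0 := hL'
      simp only [hg]; linarith
    have hgt : g 0 = d lamstar := by simp [hg]
    rw [slope_def_field, sub_zero, mul_div_assoc', le_div_iff₀ ht0, hgt]
    nlinarith [hkey]
  -- take limit t → 0+
  have htend : Filter.Tendsto (slope g 0) (nhdsWithin 0 (Set.Ioi 0)) (nhds D) :=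
    (hasDerivAt_iff_tendsto_slope.mp hgderiv).mono_left
      (nhdsWithin_mono 0 (by intro x hx; exact ne_of_gt hx))
  have hev : ∀ᶠ t in nhdsWithin (0:ℝ) (Set.Ioi 0), -B ≤ c * slope g 0 t :=
    Filter.eventually_of_mem (Ioo_mem_nhdsGT_of_mem (by norm_num : (0:ℝ) ∈ Set.Ico 0 1))
      hslope
  have hlim : -B ≤ c * D := ge_of_tendsto (htend.const_mul c) hev
  -- conclude
  have hBexp : B = ⟪etastar, v⟫ - c * D := by
    rw [hB, inner_sub_left, real_inner_smul_left, hD]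
  have : 0 ≤ ⟪etastar, v⟫ := by
    rw [hBexp] at hlim; linarith
  rw [real_inner_comm] at this
  exact this
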